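/- For 2 < k ≤ n and 1 ≤ m ≤ k, the map inserting a new maximal value at the front, α ↦ (n+1, α(1), …, α(n)), sends S_n(T_k^m) into S_{n+1}(T_k^m) injectively when m ≤ k-1; more generally, for each h ∈ {1,…,m-1} ∪ {n+m-k+2,…,n+1}, prepending the value h (and shifting values ≥ h up by one) maps S_n(T_k^m) into S_{n+1}(T_k^m). -/
import Mathlib

/-- An occurrence of the pattern `τ` in `α` at the strictly increasing
index sequence `f`: the subsequence `α ∘ f` is order-isomorphic to `τ`. -/
def PattOccursAt {k n : ℕ} (τ : Equiv.Perm (Fin k)) (α : Equiv.Perm (Fin n))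
    (f : Fin k → Fin n) : Prop :=
  StrictMono f ∧ ∀ i j : Fin k, τ i < τ j ↔ α (f i) < α (f j)

/-- `α` contains the pattern `τ`. -/
def Contains {k n : ℕ} (τ : Equiv.Perm (Fin k)) (α : Equiv.Perm (Fin n)) : Prop :=
  ∃ f, PattOccursAt τ α f

/-- `α` avoids the pattern `τ`. -/
def Avoids {k n : ℕ} (τ : Equiv.Perm (Fin k)) (α : Equiv.Perm (Fin n)) : Prop :=
  ¬ Contains τ α

/-- `α` contains the pattern `τ` exactly once. -/
def ContainsExactlyOnce {k n : ℕ} (τ : Equiv.Perm (Fin k)) (α : Equiv.Perm (Fin n)) : Prop :=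
  ∃! f, PattOccursAt τ α f

/-- `T_k^m`: the permutations `σ` of length `k` with first entry `σ(1) = m`
(one-based; in `Fin k` terms, `(σ 0) + 1 = m`). -/
def Tkm (k m : ℕ) : Set (Equiv.Perm (Fin k)) :=
  {σ | ∀ i : Fin k, (i : ℕ) = 0 → (σ i : ℕ) + 1 = m}

open Finset

private lemma perm_card_lt' {N : ℕ} (σ : Equiv.Perm (Fin N)) (t : Fin N) :
    (univ.filter fun j => σ j < t).card = (t : ℕ) := by
  have h : (univ.filter fun j => σ j < t) = (Iio t).map σ.symm.toEmbedding := by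
    ext j
    simp only [mem_filter, mem_univ, true_and, mem_map, mem_Iio, Equiv.toEmbedding_apply]
    constructor
    · intro hj; exact ⟨σ j, hj, σ.symm_apply_apply j⟩
    · rintro ⟨v, hv, rfl⟩; simpa using hv
  rw [h, card_map, Fin.card_Iio]

private lemma perm_card_gt' {N : ℕ} (σ : Equiv.Perm (Fin N)) (t : Fin N) :
    (univ.filter fun j => t < σ j).card = N - 1 - (t : ℕ) := by
  have h : (univ.filter fun j => t < σ j) = (Ioi t).map σ.symm.toEmbedding := by
    ext j
    simp only [mem_filter, mem_univ, true_and, mem_map, mem_Ioi, Equiv.toEmbedding_apply]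
    constructor
    · intro hj; exact ⟨σ j, hj, σ.symm_apply_apply j⟩
    · rintro ⟨v, hv, rfl⟩; simpa using hv
  rw [h, card_map, Fin.card_Ioi]

private lemma inj_card_lt' {k N : ℕ} (F : Fin k → Fin N) (hF : Function.Injective F) (t : Fin N) :
    (univ.filter fun j => F j < t).card ≤ (t : ℕ) := by
  have h := Finset.card_le_card_of_injOn (s := univ.filter fun j => F j < t)
    (t := Iio t) F (fun a ha => by simpa using (mem_filter.mp ha).2) hF.injOn
  rwa [Fin.card_Iio] at h

private lemma inj_card_gt' {k N : ℕ} (F : Fin k → Fin N) (hF : Function.Injective F) (t : Fin N) :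
    (univ.filter fun j => t < F j).card ≤ N - 1 - (t : ℕ) := by
  have h := Finset.card_le_card_of_injOn (s := univ.filter fun j => t < F j)
    (t := Ioi t) F (fun a ha => by simpa using (mem_filter.mp ha).2) hF.injOn
  rwa [Fin.card_Ioi] at h

theorem stmt16 (k m n : ℕ) (hk : 2 < k) (hkn : k ≤ n) (hm1 : 1 ≤ m) (hmk : m ≤ k) :
    (∀ h : ℕ, ((1 ≤ h ∧ h ≤ m - 1) ∨ (n + m - k + 2 ≤ h ∧ h ≤ n + 1)) →
      ∀ β : Equiv.Perm (Fin n), (∀ τ ∈ Tkm k m, Avoids τ β) →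
      ∀ γ : Equiv.Perm (Fin (n + 1)),
        ((γ ⟨0, by omega⟩ : ℕ) + 1 = h ∧
          ∀ i : Fin n, (γ i.succ : ℕ) =
            if (β i : ℕ) + 1 < h then (β i : ℕ) else (β i : ℕ) + 1) →
        ∀ τ ∈ Tkm k m, Avoids τ γ)
    ∧ (m ≤ k - 1 →
        ∀ β₁ β₂ : Equiv.Perm (Fin n), ∀ γ₁ γ₂ : Equiv.Perm (Fin (n + 1)),
        (∀ τ ∈ Tkm k m, Avoids τ β₁) → (∀ τ ∈ Tkm k m, Avoids τ β₂) →
        ((γ₁ ⟨0, by omega⟩ : ℕ) + 1 = n + 1 ∧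
          ∀ i : Fin n, (γ₁ i.succ : ℕ) = (β₁ i : ℕ)) →
        ((γ₂ ⟨0, by omega⟩ : ℕ) + 1 = n + 1 ∧
          ∀ i : Fin n, (γ₂ i.succ : ℕ) = (β₂ i : ℕ)) →
        γ₁ = γ₂ → β₁ = β₂) := by
  constructor
  · rintro h hh β hβ γ ⟨hγ0, hγs⟩ τ hτ ⟨f, hfmono, hfiff⟩
    have hn0 : (0 : ℕ) < n := by omega
    set i0k : Fin k := ⟨0, by omega⟩ with hi0k
    set i0 : Fin (n + 1) := ⟨0, by omega⟩ with hi0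
    have hτ0 : (τ i0k : ℕ) + 1 = m := hτ i0k rfl
    by_cases hf0 : (f i0k : ℕ) = 0
    · -- counting contradiction
      have hfe : f i0k = i0 := Fin.ext hf0
      have hFinj : Function.Injective (fun j => γ (f j)) :=
        γ.injective.comp hfmono.injective
      -- compare filters
      have hset1 : (univ.filter fun j => τ j < τ i0k)
          = (univ.filter fun j => γ (f j) < γ i0) := by
        apply filter_congr; intro j _
        exact hfe ▸ hfiff j i0k
      have hset2 : (univ.filter fun j => τ i0k < τ j)
          = (univ.filter fun j => γ i0 < γ (f j)) := by
        apply filter_congr; intro j _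
        exact hfe ▸ hfiff i0k j
      have hc1 : (univ.filter fun j => τ j < τ i0k).card = (τ i0k : ℕ) :=
        perm_card_lt' τ (τ i0k)
      have hc2 : (univ.filter fun j => τ i0k < τ j).card = k - 1 - (τ i0k : ℕ) :=
        perm_card_gt' τ (τ i0k)
      have hb1 : (univ.filter fun j => γ (f j) < γ i0).card ≤ ((γ i0 : ℕ)) :=
        inj_card_lt' _ hFinj _
      have hb2 : (univ.filter fun j => γ i0 < γ (f j)).card ≤ (n + 1) - 1 - (γ i0 : ℕ) :=
        inj_card_gt' _ hFinj _
      have e1 : (τ i0k : ℕ) ≤ (γ i0 : ℕ) := by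
        rw [← hc1, hset1]; exact hb1
      have e2 : k - 1 - (τ i0k : ℕ) ≤ (n + 1) - 1 - (γ i0 : ℕ) := by
        rw [← hc2, hset2]; exact hb2
      have htk : (τ i0k : ℕ) < k := (τ i0k).isLt
      have hg : (γ i0 : ℕ) < n + 1 := (γ i0).isLt
      omega
    · -- shift the occurrence into β
      have hpos : ∀ j, 1 ≤ (f j : ℕ) := by
        intro j
        have : f i0k ≤ f j := hfmono.monotone (by simp [hi0k, Fin.le_def])
        have := Fin.le_def.mp this
        omega
      set g : Fin k → Fin n := fun j => ⟨(f j : ℕ) - 1, by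
        have := (f j).isLt; have := hpos j; omega⟩ with hg
      have hgmono : StrictMono g := by
        intro i j hij
        have := Fin.lt_def.mp (hfmono hij)
        have := hpos i
        simp only [hg, Fin.lt_def]
        omega
      have hfs : ∀ j, f j = (g j).succ := by
        intro j
        apply Fin.ext
        simp only [Fin.val_succ, hg]
        have := hpos j
        omega
      refine hβ τ hτ ⟨g, hgmono, ?_⟩
      intro i j
      rw [hfiff i j, hfs i, hfs j, Fin.lt_def, Fin.lt_def, hγs (g i), hγs (g j)]
      split_ifs <;> omega
  · rintro _ β₁ β₂ γ₁ γ₂ _ _ ⟨_, h1⟩ ⟨_, h2⟩ hγ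
    apply Equiv.ext
    intro i
    apply Fin.ext
    have e1 := h1 i
    have e2 := h2 i
    rw [hγ] at e1
    omega
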